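/- A choice function C on the linear space L_fin of gambles of finite structure on X^ℕ is coherent (with respect to the pointwise ordering) if and only if for every n ∈ ℕ its X^n-marginal C_n, i.e., the restriction of C to nonempty finite subsets of L(X^n), is coherent (with respect to the pointwise ordering on L(X^n)). -/
import Mathlib


namespace ExchPaper

/-- `f` depends only upon the first `n` variables of the sequence. -/
def DependsOn {X : Type*} (n : ℕ) (f : (ℕ → X) → ℝ) : Prop :=
  ∀ x y : ℕ → X, (∀ k < n, x k = y k) → f x = f y

/-- `L(X^n)`, identified (via cylindrical extension) with the subspace of gambles on `X^ℕ`
that depend only upon the first `n` variables. -/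
def Ln (X : Type*) (n : ℕ) : Set ((ℕ → X) → ℝ) := {f | DependsOn n f}

/-- `L_fin`: the linear space of all gambles of finite structure on `X^ℕ`. -/
def Lfin (X : Type*) : Set ((ℕ → X) → ℝ) := {f | ∃ n, DependsOn n f}
/-- The strict pointwise vector ordering on gambles: `f ⋖ g` iff `f ≤ g` pointwise and
`f ≠ g`. -/
def ltPt {α : Type*} (f g : α → ℝ) : Prop := (∀ x, f x ≤ g x) ∧ f ≠ g

/-- Coherence of a choice function `C` whose option sets are the nonempty finite subsets of
the carrier `V` of an ordered vector space, with strict ordering `lt`; axioms C1, C2, C3a,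
C3b, C4a, C4b. -/
def CoherentCF {W : Type*} [AddCommGroup W] [Module ℝ W] (V : Set W)
    (lt : W → W → Prop) (C : Set W → Set W) : Prop :=
  -- C1
  (∀ O : Set W, O.Finite → O.Nonempty → O ⊆ V → (C O).Nonempty) ∧
  -- C2
  (∀ u v : W, u ∈ V → v ∈ V → lt u v → C {u, v} = {v}) ∧
  -- C3a
  (∀ O O1 O2 : Set W, O.Finite → O.Nonempty → O ⊆ V →
      O1.Finite → O1.Nonempty → O1 ⊆ V → O2.Finite → O2.Nonempty → O2 ⊆ V →
      C O2 ⊆ O2 \ O1 → O1 ⊆ O2 → O2 ⊆ O → C O ⊆ O \ O1) ∧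
  -- C3b
  (∀ O O1 O2 : Set W, O.Finite → O.Nonempty → O ⊆ V →
      O1.Finite → O1.Nonempty → O1 ⊆ V → O2.Finite → O2.Nonempty → O2 ⊆ V →
      C O2 ⊆ O1 → O ⊆ O2 \ O1 → C (O2 \ O) ⊆ O1) ∧
  -- C4a
  (∀ l : ℝ, 0 < l → ∀ O1 O2 : Set W, O1.Finite → O1.Nonempty → O1 ⊆ V →
      O2.Finite → O2.Nonempty → O2 ⊆ V →
      O1 ⊆ C O2 → (fun v => l • v) '' O1 ⊆ C ((fun v => l • v) '' O2)) ∧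
  -- C4b
  (∀ u : W, u ∈ V → ∀ O1 O2 : Set W, O1.Finite → O1.Nonempty → O1 ⊆ V →
      O2.Finite → O2.Nonempty → O2 ⊆ V →
      O1 ⊆ C O2 → (fun v => v + u) '' O1 ⊆ C ((fun v => v + u) '' O2))

lemma dependsOn_mono {X : Type*} {n m : ℕ} (h : n ≤ m) {f : (ℕ → X) → ℝ}
    (hf : DependsOn n f) : DependsOn m f :=
  fun x y hxy => hf x y (fun k hk => hxy k (lt_of_lt_of_le hk h))

lemma Ln_mono {X : Type*} {n m : ℕ} (h : n ≤ m) : Ln X n ⊆ Ln X m :=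
  fun _ hf => dependsOn_mono h hf

lemma Ln_subset_Lfin {X : Type*} (n : ℕ) : Ln X n ⊆ Lfin X :=
  fun f hf => ⟨n, hf⟩

lemma finite_subset_Ln {X : Type*} {O : Set ((ℕ → X) → ℝ)} (hf : O.Finite)
    (h : O ⊆ Lfin X) : ∃ n, O ⊆ Ln X n := by
  haveI := hf.fintype
  choose g hg using fun x : O => h x.2
  refine ⟨Finset.univ.sup g, fun x hx => ?_⟩
  exact dependsOn_mono (Finset.le_sup (Finset.mem_univ (⟨x, hx⟩ : O))) (hg ⟨x, hx⟩)

/-- a choice function `C` on `L_fin` is coherent (pointwise ordering) iff for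
every `n` its `X^n`-marginal (the restriction of `C` to nonempty finite subsets of `L(X^n)`)
is coherent (pointwise ordering on `L(X^n)`). -/
theorem statement_15 (X : Type*) [Fintype X] [Nonempty X]
    (C : Set ((ℕ → X) → ℝ) → Set ((ℕ → X) → ℝ)) (hC : ∀ O, C O ⊆ O) :
    CoherentCF (Lfin X) ltPt C ↔ ∀ n : ℕ, CoherentCF (Ln X n) ltPt C := by
  constructor
  · rintro ⟨h1, h2, h3a, h3b, h4a, h4b⟩ n
    have sub := Ln_subset_Lfin (X := X) n
    refine ⟨?_, ?_, ?_, ?_, ?_, ?_⟩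
    · exact fun O hf hne hO => h1 O hf hne (hO.trans sub)
    · exact fun u v hu hv hlt => h2 u v (sub hu) (sub hv) hlt
    · exact fun O O1 O2 hOf hOn hOs h1f h1n h1s h2f h2n h2s =>
        h3a O O1 O2 hOf hOn (hOs.trans sub) h1f h1n (h1s.trans sub)
          h2f h2n (h2s.trans sub)
    · exact fun O O1 O2 hOf hOn hOs h1f h1n h1s h2f h2n h2s =>
        h3b O O1 O2 hOf hOn (hOs.trans sub) h1f h1n (h1s.trans sub)
          h2f h2n (h2s.trans sub)
    · exact fun l hl O1 O2 h1f h1n h1s h2f h2n h2s =>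
        h4a l hl O1 O2 h1f h1n (h1s.trans sub) h2f h2n (h2s.trans sub)
    · exact fun u hu O1 O2 h1f h1n h1s h2f h2n h2s =>
        h4b u (sub hu) O1 O2 h1f h1n (h1s.trans sub) h2f h2n (h2s.trans sub)
  · intro h
    refine ⟨?_, ?_, ?_, ?_, ?_, ?_⟩
    · intro O hf hne hO
      obtain ⟨n, hn⟩ := finite_subset_Ln hf hO
      exact (h n).1 O hf hne hn
    · intro u v hu hv hlt
      obtain ⟨n, hn⟩ := hu
      obtain ⟨m, hm⟩ := hv
      exact (h (max n m)).2.1 u v (dependsOn_mono (le_max_left n m) hn)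
        (dependsOn_mono (le_max_right n m) hm) hlt
    · intro O O1 O2 hOf hOn hOs h1f h1n h1s h2f h2n h2s hc hsub hsub'
      obtain ⟨a, ha⟩ := finite_subset_Ln hOf hOs
      obtain ⟨b, hb⟩ := finite_subset_Ln h1f h1s
      obtain ⟨c, hc'⟩ := finite_subset_Ln h2f h2s
      refine (h (max a (max b c))).2.2.1 O O1 O2 hOf hOn
        (ha.trans (Ln_mono (le_max_left _ _))) h1f h1n
        (hb.trans (Ln_mono ((le_max_left b c).trans (le_max_right a _)))) h2f h2n
        (hc'.trans (Ln_mono ((le_max_right b c).trans (le_max_right a _)))) hc hsub hsub'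
    · intro O O1 O2 hOf hOn hOs h1f h1n h1s h2f h2n h2s hc hsub
      obtain ⟨a, ha⟩ := finite_subset_Ln hOf hOs
      obtain ⟨b, hb⟩ := finite_subset_Ln h1f h1s
      obtain ⟨c, hc'⟩ := finite_subset_Ln h2f h2s
      exact (h (max a (max b c))).2.2.2.1 O O1 O2 hOf hOn
        (ha.trans (Ln_mono (le_max_left _ _))) h1f h1n
        (hb.trans (Ln_mono ((le_max_left b c).trans (le_max_right a _)))) h2f h2n
        (hc'.trans (Ln_mono ((le_max_right b c).trans (le_max_right a _)))) hc hsub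
    · intro l hl O1 O2 h1f h1n h1s h2f h2n h2s hsub
      obtain ⟨b, hb⟩ := finite_subset_Ln h1f h1s
      obtain ⟨c, hc'⟩ := finite_subset_Ln h2f h2s
      exact (h (max b c)).2.2.2.2.1 l hl O1 O2 h1f h1n
        (hb.trans (Ln_mono (le_max_left b c))) h2f h2n
        (hc'.trans (Ln_mono (le_max_right b c))) hsub
    · intro u hu O1 O2 h1f h1n h1s h2f h2n h2s hsub
      obtain ⟨a, ha⟩ := hu
      obtain ⟨b, hb⟩ := finite_subset_Ln h1f h1s
      obtain ⟨c, hc'⟩ := finite_subset_Ln h2f h2s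
      exact (h (max a (max b c))).2.2.2.2.2 u
        (dependsOn_mono (le_max_left _ _) ha) O1 O2 h1f h1n
        (hb.trans (Ln_mono ((le_max_left b c).trans (le_max_right a _)))) h2f h2n
        (hc'.trans (Ln_mono ((le_max_right b c).trans (le_max_right a _)))) hsub
  

end ExchPaper
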